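/- Define τ_{b|x} := (1/4)[ I + ((−1)^b/√2)( Z + x X ) ] for b, x ∈ {0,1}, and Charlie's measurement operators M_{c|0} = (I + (−1)^c (2Z+X)/√5)/2 and M_{c|1} = (I + (−1)^c X)/2 for c ∈ {0,1}. Let P(b,c|x,z) := Tr[ τ_{b|x} M_{c|z} ] and define the correlators E(x,z) := ∑_{b,c∈{0,1}} (−1)^{b+c} P(b,c|x,z). Then the CHSH combination satisfies E(0,0) − E(0,1) + E(1,0) + E(1,1) = (√5 + 1)/√2, which is strictly greater than 2. Hence the behavior P violates the CHSH inequality. -/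

import Mathlib

open Matrix BigOperators ComplexOrder

noncomputable section

/-- Pauli X matrix. -/
def X : Matrix (Fin 2) (Fin 2) ℂ := !![0, 1; 1, 0]

/-- Pauli Z matrix. -/
def Z : Matrix (Fin 2) (Fin 2) ℂ := !![1, 0; 0, -1]

/-- The wired bipartite assemblage τ_{b|x}. -/
def τ : Fin 2 → Fin 2 → Matrix (Fin 2) (Fin 2) ℂ := fun b x =>
  (1 / 4 : ℝ) • ((1 : Matrix (Fin 2) (Fin 2) ℂ) +
    ((-1 : ℝ) ^ (b : ℕ) / Real.sqrt 2) • (Z + ((x : ℕ) : ℝ) • X))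

/-- Charlie's measurement operators: the (2Z+X)/√5 basis for z = 0, the X basis for z = 1. -/
def Mc : Fin 2 → Fin 2 → Matrix (Fin 2) (Fin 2) ℂ := fun c z =>
  if z = 0 then
    (1 / 2 : ℝ) • ((1 : Matrix (Fin 2) (Fin 2) ℂ) +
      ((-1 : ℝ) ^ (c : ℕ) / Real.sqrt 5) • ((2 : ℝ) • Z + X))
  else
    (1 / 2 : ℝ) • ((1 : Matrix (Fin 2) (Fin 2) ℂ) + ((-1 : ℝ) ^ (c : ℕ)) • X)

/-- The behavior obtained from τ by Charlie's measurements. -/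
def Pbeh (b c x z : Fin 2) : ℂ := (τ b x * Mc c z).trace

/-- The correlators of the behavior. -/
def E (x z : Fin 2) : ℂ :=
  ∑ b : Fin 2, ∑ c : Fin 2, (-1 : ℂ) ^ ((b : ℕ) + (c : ℕ)) * Pbeh b c x z

def e (b : Fin 2) : ℂ := (((-1:ℝ)^(b:ℕ)/Real.sqrt 2 : ℝ) : ℂ)
def f (c : Fin 2) : ℂ := (((-1:ℝ)^(c:ℕ)/Real.sqrt 5 : ℝ) : ℂ)
def g (c : Fin 2) : ℂ := (((-1:ℝ)^(c:ℕ) : ℝ) : ℂ)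

lemma tau_eq (b x : Fin 2) : τ b x =
    !![(1 + e b)/4, (e b * ((x:ℕ):ℂ))/4; (e b * ((x:ℕ):ℂ))/4, (1 - e b)/4] := by
  ext i j
  fin_cases i <;> fin_cases j <;>
    simp [τ, X, Z, e, Matrix.one_apply] <;> push_cast <;> ring

lemma Mc0_eq (c : Fin 2) : Mc c 0 =
    !![(1 + 2 * f c)/2, (f c)/2; (f c)/2, (1 - 2 * f c)/2] := by
  ext i j
  fin_cases i <;> fin_cases j <;>
    simp [Mc, X, Z, f, Matrix.one_apply] <;> push_cast <;> ring

lemma Mc1_eq (c : Fin 2) : Mc c 1 =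
    !![1/2, (g c)/2; (g c)/2, 1/2] := by
  ext i j
  fin_cases i <;> fin_cases j <;>
    simp [Mc, X, Z, g, Matrix.one_apply] <;> push_cast <;> ring


set_option maxHeartbeats 2000000 in
/-- The CHSH combination of the correlators equals (√5+1)/√2, which exceeds 2:
the behavior violates the CHSH inequality. -/
theorem chsh_violation :
    E 0 0 - E 0 1 + E 1 0 + E 1 1 = (((Real.sqrt 5 + 1) / Real.sqrt 2 : ℝ) : ℂ) ∧
    (2 : ℝ) < (Real.sqrt 5 + 1) / Real.sqrt 2 := by
  have h2 : (0:ℝ) < Real.sqrt 2 := by positivity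
  have h5 : (0:ℝ) < Real.sqrt 5 := by positivity
  have s2 : Real.sqrt 2 * Real.sqrt 2 = 2 := Real.mul_self_sqrt (by norm_num)
  have s5 : Real.sqrt 5 * Real.sqrt 5 = 5 := Real.mul_self_sqrt (by norm_num)
  constructor
  · simp only [E, Fin.sum_univ_two, Pbeh, tau_eq, Mc0_eq, Mc1_eq,
      Matrix.mul_fin_two, Matrix.trace_fin_two_of, e, f, g, Fin.val_zero, Fin.val_one]
    push_cast
    field_simp
    have c5 : ((Real.sqrt 5 : ℝ) : ℂ)^2 = 5 := by
      norm_cast; rw [sq]; exact_mod_cast s5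
    ring_nf
    linear_combination (-8) * c5
  · rw [lt_div_iff₀ h2]
    nlinarith [Real.sq_sqrt (by norm_num : (2:ℝ) ≥ 0), Real.sq_sqrt (by norm_num : (5:ℝ) ≥ 0),
      Real.sqrt_lt_sqrt (by norm_num) (by norm_num : (2:ℝ) < 5), s2, s5,
      Real.sqrt_nonneg 2, Real.sqrt_nonneg 5]
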